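/- Let f₁, ..., f_K : 𝒜 → [0, V] be bounded measurable functions on a measure space (𝒜, ν) with ν(𝒜) < ∞, let π₁ be a probability density w.r.t. ν, and define iteratively π_{k+1}(a) ∝ π_k(a)·exp(η·f_k(a)). Then for any probability density q w.r.t. ν with KL(q‖π₁) < ∞: Σ_{k=1}^K ( E_{a∼q}[f_k(a)] − E_{a∼π_k}[f_k(a)] ) ≤ η·V²·K/8 + (1/η)·KL(q‖π₁). In particular with η = sqrt(8·KL(q‖π₁)/(K·V²)), the average regret is at most V·sqrt(KL(q‖π₁)/(2K)). -/

import Mathlib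

open MeasureTheory Finset

open Real Set

lemma ew_hoeffding_key {p s : ℝ} (hp0 : 0 ≤ p) (hp1 : p ≤ 1) (hs : 0 ≤ s) :
    1 - p + p * Real.exp s ≤ Real.exp (p * s + s ^ 2 / 8) := by
  set D : ℝ → ℝ := fun x => 1 - p + p * Real.exp x with hDdef
  have hDpos : ∀ x : ℝ, 0 ≤ x → 0 < D x := by
    intro x hx
    have := Real.one_le_exp hx
    simp only [hDdef]
    nlinarith
  have hDder : ∀ x : ℝ, HasDerivAt D (p * Real.exp x) x := by
    intro x
    exact ((Real.hasDerivAt_exp x).const_mul p).const_add (1 - p)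
  set ψ : ℝ → ℝ := fun x => p + x / 4 - p * Real.exp x / D x with hψdef
  have hψder : ∀ x : ℝ, 0 ≤ x →
      HasDerivAt ψ (1 / 4 - p * (1 - p) * Real.exp x / (D x) ^ 2) x := by
    intro x hx
    have h1 : HasDerivAt (fun y : ℝ => p + y / 4) (1 / 4) x := by
      simpa using ((hasDerivAt_id x).div_const 4).const_add p
    have h2 : HasDerivAt (fun y => p * Real.exp y) (p * Real.exp x) x :=
      (Real.hasDerivAt_exp x).const_mul p
    have h3 := h2.div (hDder x) (ne_of_gt (hDpos x hx))
    have h4 := h1.sub h3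
    refine h4.congr_deriv ?_
    simp only [hDdef]
    ring
  have hψmono : MonotoneOn ψ (Ici (0:ℝ)) := by
    apply monotoneOn_of_deriv_nonneg (convex_Ici 0)
    · exact fun x hx => ((hψder x hx).continuousAt).continuousWithinAt
    · intro x hx
      rw [interior_Ici] at hx
      exact ((hψder x (le_of_lt hx)).differentiableAt).differentiableWithinAt
    · intro x hx
      rw [interior_Ici] at hx
      rw [(hψder x (le_of_lt hx)).deriv]
      have hD2 : 0 < (D x) ^ 2 := pow_pos (hDpos x (le_of_lt hx)) 2
      rw [sub_nonneg, div_le_iff₀ hD2]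
      have h := sq_nonneg ((1 - p) - p * Real.exp x)
      have he := Real.exp_pos x
      simp only [hDdef]
      nlinarith
  have hψ0 : ψ 0 = 0 := by
    simp only [hψdef, hDdef]
    norm_num
  have hψnonneg : ∀ x : ℝ, 0 ≤ x → 0 ≤ ψ x := by
    intro x hx
    have := hψmono (self_mem_Ici) hx hx
    rwa [hψ0] at this
  set φ : ℝ → ℝ := fun x => p * x + x ^ 2 / 8 - Real.log (D x) with hφdef
  have hφder : ∀ x : ℝ, 0 ≤ x → HasDerivAt φ (ψ x) x := by
    intro x hx
    have h1 : HasDerivAt (fun y : ℝ => p * y + y ^ 2 / 8) (p + x / 4) x := by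
      have := (((hasDerivAt_id x).const_mul p).add ((hasDerivAt_pow 2 x).div_const 8))
      refine this.congr_deriv ?_
      norm_num
      ring
    have h2 : HasDerivAt (fun y => Real.log (D y)) (p * Real.exp x / D x) x :=
      (hDder x).log (ne_of_gt (hDpos x hx))
    exact h1.sub h2
  have hφmono : MonotoneOn φ (Ici (0:ℝ)) := by
    apply monotoneOn_of_deriv_nonneg (convex_Ici 0)
    · exact fun x hx => ((hφder x hx).continuousAt).continuousWithinAt
    · intro x hx
      rw [interior_Ici] at hx
      exact ((hφder x (le_of_lt hx)).differentiableAt).differentiableWithinAt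
    · intro x hx
      rw [interior_Ici] at hx
      rw [(hφder x (le_of_lt hx)).deriv]
      exact hψnonneg x (le_of_lt hx)
  have hφ0 : φ 0 = 0 := by
    simp only [hφdef, hDdef]
    norm_num
  have hφs : 0 ≤ φ s := by
    have := hφmono (self_mem_Ici) hs hs
    rwa [hφ0] at this
  have hlog : Real.log (D s) ≤ p * s + s ^ 2 / 8 := by
    simp only [hφdef] at hφs; linarith
  calc D s = Real.exp (Real.log (D s)) := (Real.exp_log (hDpos s hs)).symm
    _ ≤ Real.exp (p * s + s ^ 2 / 8) := Real.exp_le_exp.mpr hlog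

lemma ew_main
    {α : Type*} [MeasurableSpace α] (ν : Measure α) [IsFiniteMeasure ν]
    (K : ℕ) (V : ℝ) (hV : 0 < V)
    (f : ℕ → α → ℝ) (hfm : ∀ k, Measurable (f k))
    (hfb : ∀ k a, f k a ∈ Set.Icc (0:ℝ) V)
    (π₁ q : α → ℝ) (hπ₁m : Measurable π₁) (hqm : Measurable q)
    (hπ₁0 : ∀ a, 0 ≤ π₁ a) (hq0 : ∀ a, 0 ≤ q a)
    (hπ₁int : Integrable π₁ ν) (hqint : Integrable q ν)
    (hπ₁prob : ∫ a, π₁ a ∂ν = 1) (hqprob : ∫ a, q a ∂ν = 1)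
    (hac : ∀ᵐ a ∂ν, π₁ a = 0 → q a = 0)
    (hKLint : Integrable (fun a => q a * Real.log (q a / π₁ a)) ν)
    (KL : ℝ) (hKL : KL = ∫ a, q a * Real.log (q a / π₁ a) ∂ν)
    (η : ℝ) (hη : 0 < η) :
    ∑ k ∈ Finset.range K,
        ((∫ a, f k a * q a ∂ν)
          - (∫ a, f k a * (π₁ a * Real.exp (η * ∑ j ∈ Finset.range k, f j a)) ∂ν)
              / (∫ a, π₁ a * Real.exp (η * ∑ j ∈ Finset.range k, f j a) ∂ν))
        ≤ η * V ^ 2 * K / 8 + (1 / η) * KL := by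
  set S : ℕ → α → ℝ := fun k a => ∑ j ∈ Finset.range k, f j a with hSdef
  set g : ℕ → α → ℝ := fun k a => π₁ a * Real.exp (η * S k a) with hgdef
  set Z : ℕ → ℝ := fun k => ∫ a, g k a ∂ν with hZdef
  set I : ℕ → ℝ := fun k => ∫ a, f k a * g k a ∂ν with hIdef
  -- basic facts about S
  have hS0 : ∀ k a, 0 ≤ S k a := fun k a => Finset.sum_nonneg fun j _ => (hfb j a).1
  have hSle : ∀ k a, S k a ≤ k * V := by
    intro k a
    calc S k a ≤ ∑ _j ∈ Finset.range k, V :=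
          Finset.sum_le_sum fun j _ => (hfb j a).2
      _ = k * V := by simp [Finset.sum_const, Finset.card_range, nsmul_eq_mul]
  have hSm : ∀ k, Measurable (S k) := fun k => Finset.measurable_sum _ (fun j _ => hfm j)
  have hgm : ∀ k, Measurable (g k) := fun k =>
    hπ₁m.mul ((measurable_const.mul (hSm k)).exp)
  have hg0 : ∀ k a, 0 ≤ g k a := fun k a => mul_nonneg (hπ₁0 a) (Real.exp_pos _).le
  have hgint : ∀ k, Integrable (g k) ν := by
    intro k
    have h1 : Integrable (fun a => Real.exp (η * S k a) * π₁ a) ν := by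
      apply hπ₁int.bdd_mul ((measurable_const.mul (hSm k)).exp).aestronglyMeasurable
      refine Filter.Eventually.of_forall fun a => show ‖_‖ ≤ Real.exp (η * (k * V)) from ?_
      rw [Real.norm_eq_abs, abs_of_nonneg (Real.exp_pos _).le]
      exact Real.exp_le_exp.mpr (mul_le_mul_of_nonneg_left (hSle k a) hη.le)
    exact h1.congr (Filter.Eventually.of_forall fun a => by simp [hgdef]; ring)
  have hfgint : ∀ k, Integrable (fun a => f k a * g k a) ν := by
    intro k
    have h1 : Integrable (fun a => (f k a * Real.exp (η * S k a)) * π₁ a) ν := by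
      apply hπ₁int.bdd_mul (((hfm k).mul ((measurable_const.mul (hSm k)).exp)).aestronglyMeasurable)
      refine Filter.Eventually.of_forall fun a => show ‖f k a * Real.exp (η * S k a)‖ ≤ V * Real.exp (η * (k * V)) from ?_
      rw [Real.norm_eq_abs, abs_of_nonneg (mul_nonneg (hfb k a).1 (Real.exp_pos _).le)]
      exact mul_le_mul (hfb k a).2
        (Real.exp_le_exp.mpr (mul_le_mul_of_nonneg_left (hSle k a) hη.le))
        (Real.exp_pos _).le hV.le
    exact h1.congr (Filter.Eventually.of_forall fun a => by simp [hgdef]; ring)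
  have hfqint : ∀ k, Integrable (fun a => f k a * q a) ν := by
    intro k
    apply hqint.bdd_mul (hfm k).aestronglyMeasurable
    refine Filter.Eventually.of_forall fun a => show ‖_‖ ≤ V from ?_
    rw [Real.norm_eq_abs, abs_of_nonneg (hfb k a).1]
    exact (hfb k a).2
  have hZ1 : ∀ k, 1 ≤ Z k := by
    intro k
    calc (1:ℝ) = ∫ a, π₁ a ∂ν := hπ₁prob.symm
      _ ≤ Z k := by
          apply integral_mono hπ₁int (hgint k)
          intro a
          simpa [hgdef] using
            le_mul_of_one_le_right (hπ₁0 a)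
              (Real.one_le_exp (mul_nonneg hη.le (hS0 k a)))
  have hZpos : ∀ k, 0 < Z k := fun k => lt_of_lt_of_le one_pos (hZ1 k)
  have hI0 : ∀ k, 0 ≤ I k := fun k =>
    integral_nonneg fun a => mul_nonneg (hfb k a).1 (hg0 k a)
  have hIle : ∀ k, I k ≤ V * Z k := by
    intro k
    have h1 : I k ≤ ∫ a, V * g k a ∂ν := by
      apply integral_mono (hfgint k) ((hgint k).const_mul V)
      intro a
      exact mul_le_mul_of_nonneg_right (hfb k a).2 (hg0 k a)
    rwa [integral_const_mul] at h1
  -- one-step bound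
  have hstep : ∀ k, Z (k+1) ≤ Z k * Real.exp (η * (I k / Z k) + η ^ 2 * V ^ 2 / 8) := by
    intro k
    have hgsucc : ∀ a, g (k+1) a = g k a * Real.exp (η * f k a) := by
      intro a
      simp only [hgdef, hSdef, Finset.sum_range_succ, mul_add, Real.exp_add]
      ring
    have hconv : ∀ a, Real.exp (η * f k a) ≤
        1 - f k a / V + (f k a / V) * Real.exp (η * V) := by
      intro a
      have hθ0 : 0 ≤ f k a / V := div_nonneg (hfb k a).1 hV.le
      have hθ1 : f k a / V ≤ 1 := (div_le_one hV).mpr (hfb k a).2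
      have := convexOn_exp.2 (Set.mem_univ (0:ℝ)) (Set.mem_univ (η * V))
        (by linarith : (0:ℝ) ≤ 1 - f k a / V) hθ0 (by ring)
      simp only [smul_eq_mul, mul_zero, zero_add, Real.exp_zero, mul_one] at this
      have harg : f k a / V * (η * V) = η * f k a := by field_simp
      rw [harg] at this
      linarith
    have hpt : ∀ a, g (k+1) a ≤ g k a + (Real.exp (η*V) - 1) / V * (f k a * g k a) := by
      intro a
      rw [hgsucc]
      have h1 := mul_le_mul_of_nonneg_left (hconv a) (hg0 k a)
      have h2 : g k a * (1 - f k a / V + (f k a / V) * Real.exp (η*V))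
          = g k a + (Real.exp (η*V) - 1) / V * (f k a * g k a) := by
        field_simp
        ring
      linarith
    have hZsucc : Z (k+1) ≤ Z k + (Real.exp (η*V) - 1) / V * I k := by
      have h1 : Z (k+1) ≤ ∫ a, (g k a + (Real.exp (η*V) - 1) / V * (f k a * g k a)) ∂ν :=
        integral_mono (hgint (k+1)) ((hgint k).add ((hfgint k).const_mul _))
          hpt
      rwa [integral_add (hgint k) ((hfgint k).const_mul _), integral_const_mul] at h1
    set pk : ℝ := I k / (V * Z k) with hpkdef
    have hVZ : 0 < V * Z k := mul_pos hV (hZpos k)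
    have hpk0 : 0 ≤ pk := div_nonneg (hI0 k) hVZ.le
    have hpk1 : pk ≤ 1 := (div_le_one hVZ).mpr (hIle k)
    have hkey := ew_hoeffding_key hpk0 hpk1 (mul_nonneg hη.le hV.le)
    have hfact : Z k + (Real.exp (η*V) - 1) / V * I k
        = Z k * (1 - pk + pk * Real.exp (η*V)) := by
      simp only [hpkdef]
      field_simp [(hZpos k).ne', hV.ne']
      ring
    have harg2 : pk * (η * V) + (η*V) ^ 2 / 8 = η * (I k / Z k) + η ^ 2 * V ^ 2 / 8 := by
      simp only [hpkdef]
      field_simp [(hZpos k).ne', hV.ne']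
    calc Z (k+1) ≤ Z k * (1 - pk + pk * Real.exp (η*V)) := by rw [← hfact]; exact hZsucc
      _ ≤ Z k * Real.exp (pk * (η * V) + (η*V) ^ 2 / 8) :=
          mul_le_mul_of_nonneg_left hkey (hZpos k).le
      _ = Z k * Real.exp (η * (I k / Z k) + η ^ 2 * V ^ 2 / 8) := by rw [harg2]
  -- telescoping
  have hlog : ∀ n : ℕ, Real.log (Z n) ≤
      η * (∑ k ∈ Finset.range n, I k / Z k) + n * (η ^ 2 * V ^ 2 / 8) := by
    intro n
    induction n with
    | zero =>
      have hZ0 : Z 0 = 1 := by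
        simp only [hZdef, hgdef, hSdef, Finset.range_zero, Finset.sum_empty, mul_zero,
          Real.exp_zero, mul_one]
        exact hπ₁prob
      simp [hZ0]
    | succ n ih =>
      have h1 : Real.log (Z (n+1)) ≤
          Real.log (Z n) + (η * (I n / Z n) + η ^ 2 * V ^ 2 / 8) := by
        calc Real.log (Z (n+1)) ≤ Real.log (Z n * Real.exp (η * (I n / Z n) + η ^ 2 * V ^ 2 / 8)) :=
              Real.log_le_log (hZpos (n+1)) (hstep n)
          _ = Real.log (Z n) + (η * (I n / Z n) + η ^ 2 * V ^ 2 / 8) := by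
              rw [Real.log_mul (hZpos n).ne' (Real.exp_ne_zero _), Real.log_exp]
      rw [Finset.sum_range_succ]
      push_cast
      linarith
  -- Gibbs variational inequality
  have hqSint : Integrable (fun a => q a * S K a) ν := by
    have h1 : Integrable (fun a => S K a * q a) ν := by
      apply hqint.bdd_mul (hSm K).aestronglyMeasurable
      refine Filter.Eventually.of_forall fun a => show ‖_‖ ≤ K * V from ?_
      rw [Real.norm_eq_abs, abs_of_nonneg (hS0 K a)]
      exact hSle K a
    exact h1.congr (Filter.Eventually.of_forall fun a => by ring)
  have hGibbs : η * ∫ a, q a * S K a ∂ν ≤ Real.log (Z K) + KL := by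
    have hZk := hZpos K
    have hae : ∀ᵐ a ∂ν,
        q a * (η * S K a) - q a * Real.log (q a / π₁ a) - q a * Real.log (Z K)
          ≤ g K a / Z K - q a := by
      filter_upwards [hac] with a hA
      by_cases hq : q a = 0
      · simp only [hq, zero_mul, sub_zero, zero_sub, sub_zero, neg_zero]
        have : 0 ≤ g K a / Z K := div_nonneg (hg0 K a) hZk.le
        simpa [hq] using this
      · have hqpos : 0 < q a := lt_of_le_of_ne (hq0 a) (Ne.symm hq)
        have hπpos : 0 < π₁ a := by
          rcases (hπ₁0 a).lt_or_eq with h | h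
          · exact h
          · exact absurd (hA h.symm) hq
        have hgpos : 0 < g K a := mul_pos hπpos (Real.exp_pos _)
        have hx : 0 < g K a / (Z K * q a) := div_pos hgpos (mul_pos hZk hqpos)
        have hlogx := Real.log_le_sub_one_of_pos hx
        have hmul := mul_le_mul_of_nonneg_left hlogx hqpos.le
        have hexpand : Real.log (g K a / (Z K * q a))
            = η * S K a + Real.log (π₁ a) - Real.log (q a) - Real.log (Z K) := by
          rw [Real.log_div hgpos.ne' (mul_pos hZk hqpos).ne',
            Real.log_mul hZk.ne' hq]
          have : Real.log (g K a) = Real.log (π₁ a) + η * S K a := by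
            simp only [hgdef]
            rw [Real.log_mul hπpos.ne' (Real.exp_ne_zero _), Real.log_exp]
          rw [this]
          ring
        have hqlog : Real.log (q a / π₁ a) = Real.log (q a) - Real.log (π₁ a) :=
          Real.log_div hq hπpos.ne'
        have hrhs : q a * (g K a / (Z K * q a) - 1) = g K a / Z K - q a := by
          field_simp
        rw [hexpand, hrhs] at hmul
        rw [hqlog]
        nlinarith [hmul]
    have hint1 : Integrable (fun a => q a * (η * S K a)) ν := by
      have := hqSint.const_mul η
      exact this.congr (Filter.Eventually.of_forall fun a => by ring)
    have hint3 : Integrable (fun a => q a * Real.log (Z K)) ν := hqint.mul_const _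
    have hintL : Integrable
        (fun a => q a * (η * S K a) - q a * Real.log (q a / π₁ a) - q a * Real.log (Z K)) ν :=
      (hint1.sub hKLint).sub hint3
    have hint12 : Integrable
        (fun a => q a * (η * S K a) - q a * Real.log (q a / π₁ a)) ν := hint1.sub hKLint
    have hintg : Integrable (fun a => g K a / Z K) ν := (hgint K).div_const _
    have hintR : Integrable (fun a => g K a / Z K - q a) ν := hintg.sub hqint
    have hmono := integral_mono_ae hintL hintR hae
    rw [integral_sub hint12 hint3, integral_sub hint1 hKLint,
      integral_sub hintg hqint, integral_div, hqprob] at hmono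
    have he1 : ∫ a, q a * (η * S K a) ∂ν = η * ∫ a, q a * S K a ∂ν := by
      rw [← integral_const_mul]
      congr 1
      funext a
      ring
    have he2 : ∫ a, q a * Real.log (Z K) ∂ν = Real.log (Z K) := by
      rw [integral_mul_const, hqprob, one_mul]
    have he3 : Z K / Z K = 1 := div_self hZk.ne'
    rw [he1, he2, he3] at hmono
    rw [hKL]
    linarith
  -- sum swap
  have hswap : ∑ k ∈ Finset.range K, (∫ a, f k a * q a ∂ν) = ∫ a, q a * S K a ∂ν := by
    rw [← integral_finset_sum _ (fun k _ => hfqint k)]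
    congr 1
    funext a
    rw [← Finset.sum_mul]
    exact mul_comm _ _
  -- conclude
  have hgoal : ∑ k ∈ Finset.range K,
      ((∫ a, f k a * q a ∂ν)
        - (∫ a, f k a * (π₁ a * Real.exp (η * ∑ j ∈ Finset.range k, f j a)) ∂ν)
            / (∫ a, π₁ a * Real.exp (η * ∑ j ∈ Finset.range k, f j a) ∂ν))
      = ∑ k ∈ Finset.range K, ((∫ a, f k a * q a ∂ν) - I k / Z k) := rfl
  rw [hgoal, Finset.sum_sub_distrib, hswap]
  have h1 : η * ∫ a, q a * S K a ∂ν ≤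
      η * ∑ k ∈ Finset.range K, I k / Z k + K * (η ^ 2 * V ^ 2 / 8) + KL := by
    have := hlog K
    linarith
  have hc : η * (η * V ^ 2 * K / 8 + 1 / η * KL) = η * (η * V ^ 2) * K / 8 + KL := by
    field_simp
  apply le_of_mul_le_mul_left _ hη
  rw [hc, mul_sub]
  nlinarith [h1]

/-- Continuous exponential-weights (entropic mirror descent) regret bound over a
general action space: with `π_{k+1} ∝ π_k · exp(η f_k)`, for any comparator density
`q` with finite `KL(q‖π₁)`,
`Σ_k (E_q[f_k] − E_{π_k}[f_k]) ≤ ηV²K/8 + KL(q‖π₁)/η`; in particular, with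
`η = sqrt(8 KL/(K V²))`, the average regret is at most `V·sqrt(KL/(2K))`. -/
theorem exp_weights_regret
    {α : Type*} [MeasurableSpace α] (ν : Measure α) [IsFiniteMeasure ν]
    (K : ℕ) (V : ℝ) (hV : 0 < V)
    (f : ℕ → α → ℝ) (hfm : ∀ k, Measurable (f k))
    (hfb : ∀ k a, f k a ∈ Set.Icc (0:ℝ) V)
    (π₁ q : α → ℝ) (hπ₁m : Measurable π₁) (hqm : Measurable q)
    (hπ₁0 : ∀ a, 0 ≤ π₁ a) (hq0 : ∀ a, 0 ≤ q a)
    (hπ₁int : Integrable π₁ ν) (hqint : Integrable q ν)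
    (hπ₁prob : ∫ a, π₁ a ∂ν = 1) (hqprob : ∫ a, q a ∂ν = 1)
    (hac : ∀ᵐ a ∂ν, π₁ a = 0 → q a = 0)
    (hKLint : Integrable (fun a => q a * Real.log (q a / π₁ a)) ν)
    (KL : ℝ) (hKL : KL = ∫ a, q a * Real.log (q a / π₁ a) ∂ν) :
    (∀ η : ℝ, 0 < η →
      ∑ k ∈ Finset.range K,
        ((∫ a, f k a * q a ∂ν)
          - (∫ a, f k a * (π₁ a * Real.exp (η * ∑ j ∈ Finset.range k, f j a)) ∂ν)
              / (∫ a, π₁ a * Real.exp (η * ∑ j ∈ Finset.range k, f j a) ∂ν))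
        ≤ η * V ^ 2 * K / 8 + (1 / η) * KL) ∧
    (0 < K → 0 < KL →
      (1 / (K : ℝ)) * ∑ k ∈ Finset.range K,
        ((∫ a, f k a * q a ∂ν)
          - (∫ a, f k a * (π₁ a *
                Real.exp (Real.sqrt (8 * KL / (K * V ^ 2)) * ∑ j ∈ Finset.range k, f j a)) ∂ν)
              / (∫ a, π₁ a *
                Real.exp (Real.sqrt (8 * KL / (K * V ^ 2)) * ∑ j ∈ Finset.range k, f j a) ∂ν))
        ≤ V * Real.sqrt (KL / (2 * K))) := by
  have main := ew_main ν K V hV f hfm hfb π₁ q hπ₁m hqm hπ₁0 hq0 hπ₁int hqint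
    hπ₁prob hqprob hac hKLint KL hKL
  refine ⟨main, ?_⟩
  intro hK hKLpos
  have hKpos : 0 < (K : ℝ) := Nat.cast_pos.mpr hK
  set η : ℝ := Real.sqrt (8 * KL / (K * V ^ 2)) with hηdef
  have hargpos : 0 < 8 * KL / (K * V ^ 2) := by positivity
  have hηpos : 0 < η := Real.sqrt_pos.mpr hargpos
  have hη2 : η ^ 2 = 8 * KL / (K * V ^ 2) := Real.sq_sqrt hargpos.le
  have hb := main η hηpos
  set y : ℝ := Real.sqrt (KL / (2 * K)) with hydef
  have hy0 : 0 ≤ y := Real.sqrt_nonneg _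
  have hy2 : y ^ 2 = KL / (2 * K) := Real.sq_sqrt (by positivity)
  -- show the bound equals V * y after dividing by K
  have heq : η * V ^ 2 * K / 8 + (1 / η) * KL = K * (V * y) := by
    have ha : 0 ≤ η * V ^ 2 * K / 8 + (1 / η) * KL := by positivity
    have hbpos : 0 ≤ (K : ℝ) * (V * y) := by positivity
    have hsq : (η * V ^ 2 * K / 8 + (1 / η) * KL) ^ 2 = ((K : ℝ) * (V * y)) ^ 2 := by
      have h1 : η ^ 2 * (K * V ^ 2) = 8 * KL := by
        rw [hη2]; field_simp
      have h2 : y ^ 2 * (2 * K) = KL := by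
        rw [hy2]; field_simp
      field_simp
      nlinarith [hηpos, sq_nonneg η, sq_nonneg y]
    calc η * V ^ 2 * K / 8 + (1 / η) * KL
        = Real.sqrt ((η * V ^ 2 * K / 8 + (1 / η) * KL) ^ 2) := (Real.sqrt_sq ha).symm
      _ = Real.sqrt (((K : ℝ) * (V * y)) ^ 2) := by rw [hsq]
      _ = (K : ℝ) * (V * y) := Real.sqrt_sq hbpos
  rw [heq] at hb
  calc (1 / (K : ℝ)) * ∑ k ∈ Finset.range K,
        ((∫ a, f k a * q a ∂ν)
          - (∫ a, f k a * (π₁ a * Real.exp (η * ∑ j ∈ Finset.range k, f j a)) ∂ν)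
              / (∫ a, π₁ a * Real.exp (η * ∑ j ∈ Finset.range k, f j a) ∂ν))
      ≤ (1 / (K : ℝ)) * ((K : ℝ) * (V * y)) := by
        apply mul_le_mul_of_nonneg_left hb (by positivity)
    _ = V * y := by field_simp
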